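/- Define g : (0,∞) → ℝ by g(r) := ( ln(r/(2+r)) + 1/r + 1/(2+r) )·( r²/2 + r³/6 ). Then for every r > 0, g(r) = ( ∫_r^∞ (Y + Y²/2)^{-2} dY )·( ∫_0^r (Y + Y²/2) dY ); moreover g is monotone increasing on (0,∞) and g(r) → 2/9 as r → ∞; in particular sup_{r>0} g(r) = 2/9. -/

import Mathlib

open Set MeasureTheory Filter
open scoped Topology

/-- The function `g(r) = (ln(r/(2+r)) + 1/r + 1/(2+r))·(r²/2 + r³/6)`. -/
noncomputable def gfun (r : ℝ) : ℝ :=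
  (Real.log (r / (2 + r)) + 1 / r + 1 / (2 + r)) * (r ^ 2 / 2 + r ^ 3 / 6)

noncomputable def Afun (r : ℝ) : ℝ := Real.log (r / (2 + r)) + 1 / r + 1 / (2 + r)

lemma hasDerivAt_Afun (x : ℝ) (hx : 0 < x) :
    HasDerivAt Afun (-(((x + x ^ 2 / 2) ^ 2)⁻¹)) x := by
  have h2 : (0:ℝ) < 2 + x := by linarith
  have h1 : HasDerivAt (fun y : ℝ => Real.log y - Real.log (2 + y) + 1/y + 1/(2+y))
      (x⁻¹ - (2+x)⁻¹ + (-(x^2)⁻¹) + (-((2+x)^2)⁻¹)) x := by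
    have hlog : HasDerivAt Real.log x⁻¹ x := Real.hasDerivAt_log hx.ne'
    have hlog2 : HasDerivAt (fun y : ℝ => Real.log (2 + y)) (2+x)⁻¹ x := by
      have := (Real.hasDerivAt_log h2.ne').comp x ((hasDerivAt_id x).const_add 2)
      simpa [Function.comp_def] using this
    have hinv : HasDerivAt (fun y : ℝ => 1/y) (-(x^2)⁻¹) x := by
      simpa [one_div] using hasDerivAt_inv hx.ne'
    have hinv2 : HasDerivAt (fun y : ℝ => 1/(2+y)) (-((2+x)^2)⁻¹) x := by
      have := (hasDerivAt_inv h2.ne').comp x ((hasDerivAt_id x).const_add 2)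
      simpa [one_div, Function.comp_def] using this
    exact ((hlog.sub hlog2).add hinv).add hinv2
  have heq : Afun =ᶠ[𝓝 x] fun y => Real.log y - Real.log (2 + y) + 1/y + 1/(2+y) := by
    filter_upwards [eventually_gt_nhds hx] with y hy
    have h2y : (0:ℝ) < 2 + y := by linarith
    unfold Afun
    rw [Real.log_div hy.ne' h2y.ne']
  have H := h1.congr_of_eventuallyEq heq
  refine H.congr_deriv ?_
  field_simp
  ring

lemma tendsto_Afun : Tendsto Afun atTop (𝓝 0) := by
  have h1 : Tendsto (fun r : ℝ => 1/r) atTop (𝓝 0) := by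
    simpa [one_div] using tendsto_inv_atTop_zero
  have h2 : Tendsto (fun r : ℝ => 1/(2+r)) atTop (𝓝 0) := by
    have : Tendsto (fun r : ℝ => 2 + r) atTop atTop :=
      tendsto_atTop_add_const_left _ 2 tendsto_id
    simpa [one_div, Function.comp_def] using tendsto_inv_atTop_zero.comp this
  have hq : Tendsto (fun r : ℝ => r/(2+r)) atTop (𝓝 1) := by
    have he : (fun r : ℝ => (2*r⁻¹ + 1)⁻¹) =ᶠ[atTop] fun r => r/(2+r) := by
      filter_upwards [eventually_gt_atTop 0] with r hr
      have h2r : (0:ℝ) < 2 + r := by linarith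
      field_simp
    have hb : Tendsto (fun r : ℝ => 2*r⁻¹ + 1) atTop (𝓝 1) := by
      have := (tendsto_inv_atTop_zero.const_mul (2:ℝ)).add_const (1:ℝ)
      simpa using this
    have := hb.inv₀ one_ne_zero
    rw [tendsto_congr' he] at this
    simpa using this
  have hlog : Tendsto (fun r : ℝ => Real.log (r/(2+r))) atTop (𝓝 0) := by
    have := (Real.continuousAt_log one_ne_zero).tendsto.comp hq
    simpa [Function.comp_def] using this
  have := (hlog.add h1).add h2
  unfold Afun
  simpa using this

/-- If `F` has negative derivative on `(0,∞)` and tends to `0` at infinity, then `F > 0`. -/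
lemma pos_of_deriv_neg_tendsto (F F' : ℝ → ℝ)
    (hd : ∀ x ∈ Ioi (0:ℝ), HasDerivAt F (F' x) x)
    (hneg : ∀ x ∈ Ioi (0:ℝ), F' x < 0)
    (hlim : Tendsto F atTop (𝓝 0)) :
    ∀ r ∈ Ioi (0:ℝ), 0 < F r := by
  have hcont : ContinuousOn F (Ioi 0) := fun x hx => (hd x hx).continuousAt.continuousWithinAt
  have hanti : StrictAntiOn F (Ioi 0) := by
    apply strictAntiOn_of_deriv_neg (convex_Ioi 0) hcont
    intro x hx
    rw [interior_Ioi] at hx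
    rw [(hd x hx).deriv]
    exact hneg x hx
  intro r hr
  simp only [mem_Ioi] at hr
  have h1 : (0:ℝ) ≤ F (r+1) := by
    apply le_of_tendsto hlim
    filter_upwards [eventually_ge_atTop (r+1)] with x hxx
    rcases eq_or_lt_of_le hxx with h | h
    · exact le_of_eq (by rw [h])
    · exact (hanti (by simp; linarith) (by simp; linarith) h).le
  have h2 := hanti (show r ∈ Ioi (0:ℝ) by simpa using hr)
    (show r+1 ∈ Ioi (0:ℝ) by simp; linarith) (by linarith)
  linarith

noncomputable def cfun (r : ℝ) : ℝ := (4/3)*(3+r)/(r*(2+r)^3)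

lemma tendsto_inv31 : Tendsto (fun r : ℝ => 3*r⁻¹+1) atTop (𝓝 1) := by
  have := (tendsto_inv_atTop_zero.const_mul (3:ℝ)).add_const (1:ℝ)
  simpa using this

lemma tendsto_inv21 : Tendsto (fun r : ℝ => 2*r⁻¹+1) atTop (𝓝 1) := by
  have := (tendsto_inv_atTop_zero.const_mul (2:ℝ)).add_const (1:ℝ)
  simpa using this

lemma tendsto_cfun : Tendsto cfun atTop (𝓝 0) := by
  have h : Tendsto (fun r : ℝ => (4/3)*(3*r⁻¹+1) * (r⁻¹)^3 * (((2*r⁻¹+1))^3)⁻¹)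
      atTop (𝓝 ((4/3)*1*0^3*(1^3)⁻¹)) := by
    exact (((tendsto_inv31.const_mul (4/3)).mul (tendsto_inv_atTop_zero.pow 3)).mul
      ((tendsto_inv21.pow 3).inv₀ (by norm_num)))
  have he : (fun r : ℝ => (4/3)*(3*r⁻¹+1) * (r⁻¹)^3 * (((2*r⁻¹+1))^3)⁻¹) =ᶠ[atTop] cfun := by
    filter_upwards [eventually_gt_atTop 0] with r hr
    have h2r : (0:ℝ) < 2 + r := by linarith
    unfold cfun
    field_simp
  rw [tendsto_congr' he] at h
  simpa using h

lemma cfun_lt_Afun : ∀ r ∈ Ioi (0:ℝ), cfun r < Afun r := by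
  have key := pos_of_deriv_neg_tendsto (fun r => Afun r - cfun r)
    (fun x => -(8/(x^2*(2+x)^4))) ?_ ?_ ?_
  · intro r hr
    have := key r hr
    linarith
  · intro x hx
    simp only [mem_Ioi] at hx
    have h2 : (0:ℝ) < 2 + x := by linarith
    have hA := hasDerivAt_Afun x hx
    have hc := (((hasDerivAt_id x).const_add (3:ℝ)).const_mul ((4:ℝ)/3)).div
      ((hasDerivAt_id x).mul (((hasDerivAt_id x).const_add (2:ℝ)).pow 3))
      (show x*(2+x)^3 ≠ 0 by positivity)
    have H := hA.sub hc
    refine H.congr_deriv ?_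
    have hx' : x ≠ 0 := hx.ne'
    have h2' : (2+x) ≠ 0 := h2.ne'
    simp only [Pi.mul_apply, Pi.pow_apply, id_eq]
    field_simp
    ring
  · intro x hx
    simp only [mem_Ioi] at hx
    have : (0:ℝ) < 8/(x^2*(2+x)^4) := by positivity
    linarith
  · have := tendsto_Afun.sub tendsto_cfun
    simpa using this

lemma Afun_lt : ∀ r ∈ Ioi (0:ℝ), Afun r < 4/(3*r^3) := by
  have key := pos_of_deriv_neg_tendsto (fun r => 4/(3*r^3) - Afun r)
    (fun x => -((16+16*x)/(x^4*(2+x)^2))) ?_ ?_ ?_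
  · intro r hr
    have := key r hr
    linarith
  · intro x hx
    simp only [mem_Ioi] at hx
    have h2 : (0:ℝ) < 2 + x := by linarith
    have hA := hasDerivAt_Afun x hx
    have hq := (hasDerivAt_const x (4:ℝ)).div ((hasDerivAt_pow 3 x).const_mul (3:ℝ))
      (show 3*x^3 ≠ 0 by positivity)
    have H := hq.sub hA
    refine H.congr_deriv ?_
    have hx' : x ≠ 0 := hx.ne'
    have h2' : (2+x) ≠ 0 := h2.ne'
    field_simp
    ring
  · intro x hx
    simp only [mem_Ioi] at hx
    have : (0:ℝ) < (16+16*x)/(x^4*(2+x)^2) := by positivity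
    linarith
  · have h : Tendsto (fun r : ℝ => 4/(3*r^3)) atTop (𝓝 0) := by
      have h0 : Tendsto (fun r : ℝ => (4/3)*(r⁻¹)^3) atTop (𝓝 ((4/3)*0^3)) :=
        (tendsto_inv_atTop_zero.pow 3).const_mul _
      have he : (fun r : ℝ => (4/3)*(r⁻¹)^3) = fun r : ℝ => 4/(3*r^3) := by
        funext r
        rw [inv_pow]
        rw [show (4:ℝ)/(3*r^3) = 4*(3*r^3)⁻¹ from div_eq_mul_inv _ _, mul_inv]
        ring
      rw [he] at h0
      simpa using h0
    have := h.sub tendsto_Afun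
    simpa using this

lemma hasDerivAt_gfun (x : ℝ) (hx : 0 < x) :
    HasDerivAt gfun
      (Afun x * (x + x^2/2) - ((x + x^2/2)^2)⁻¹ * (x^2/2 + x^3/6)) x := by
  have hB : HasDerivAt (fun r : ℝ => r^2/2 + r^3/6) (x + x^2/2) x := by
    have := ((hasDerivAt_pow 2 x).div_const 2).add ((hasDerivAt_pow 3 x).div_const 6)
    refine this.congr_deriv ?_
    push_cast
    ring
  have H := (hasDerivAt_Afun x hx).mul hB
  have hg : gfun = fun r => Afun r * (r^2/2 + r^3/6) := rfl
  rw [hg]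
  refine H.congr_deriv ?_
  ring

lemma strictMono_gfun : StrictMonoOn gfun (Ioi 0) := by
  apply strictMonoOn_of_deriv_pos (convex_Ioi 0)
  · exact fun x hx => (hasDerivAt_gfun x hx).continuousAt.continuousWithinAt
  · intro x hx
    rw [interior_Ioi] at hx
    have hx' : (0:ℝ) < x := hx
    rw [(hasDerivAt_gfun x hx').deriv]
    have h2 : (0:ℝ) < 2 + x := by linarith
    have hkey : ((x + x^2/2)^2)⁻¹ * (x^2/2 + x^3/6) = cfun x * (x + x^2/2) := by
      unfold cfun
      have hne : (x + x^2/2) ≠ 0 := by positivity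
      field_simp
      ring
    rw [hkey]
    have hc := cfun_lt_Afun x hx
    have hb : (0:ℝ) < x + x^2/2 := by positivity
    have := mul_lt_mul_of_pos_right hc hb
    linarith

lemma tendsto_gfun : Tendsto gfun atTop (𝓝 (2/9)) := by
  have hL : Tendsto (fun r : ℝ => (2/9)*((3*r⁻¹+1)^2*((2*r⁻¹+1)^3)⁻¹)) atTop
      (𝓝 ((2/9)*((1:ℝ)^2*((1:ℝ)^3)⁻¹))) :=
    ((tendsto_inv31.pow 2).mul ((tendsto_inv21.pow 3).inv₀ (by norm_num))).const_mul _
  have hU : Tendsto (fun r : ℝ => 2/9 + (2/3)*r⁻¹) atTop (𝓝 (2/9 + (2/3)*0)) :=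
    tendsto_const_nhds.add (tendsto_inv_atTop_zero.const_mul _)
  norm_num at hL hU
  apply tendsto_of_tendsto_of_tendsto_of_le_of_le' hL hU
  · filter_upwards [eventually_gt_atTop 0] with r hr
    have h2 : (0:ℝ) < 2 + r := by linarith
    have hc := (cfun_lt_Afun r hr).le
    have hB : (0:ℝ) ≤ r^2/2 + r^3/6 := by positivity
    have h1 := mul_le_mul_of_nonneg_right hc hB
    have he : cfun r * (r^2/2 + r^3/6) = (2/9)*((3*r⁻¹+1)^2*((2*r⁻¹+1)^3)⁻¹) := by
      unfold cfun
      field_simp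
      ring
    have hg : gfun r = Afun r * (r^2/2 + r^3/6) := rfl
    rw [hg, ← he]
    exact h1
  · filter_upwards [eventually_gt_atTop 0] with r hr
    have hA := (Afun_lt r hr).le
    have hB : (0:ℝ) ≤ r^2/2 + r^3/6 := by positivity
    have h1 := mul_le_mul_of_nonneg_right hA hB
    have he : (4/(3*r^3)) * (r^2/2 + r^3/6) = 2/9 + (2/3)*r⁻¹ := by
      field_simp
      ring
    have hg : gfun r = Afun r * (r^2/2 + r^3/6) := rfl
    rw [hg, ← he]
    exact h1

/-- `g(r)` equals the product `(∫_r^∞ (Y+Y²/2)^{-2} dY)·(∫_0^r (Y+Y²/2) dY)`, is monotone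
increasing on `(0,∞)`, converges to `2/9` at infinity, and `sup_{r>0} g(r) = 2/9`. -/
theorem hardy_g_properties :
    (∀ r : ℝ, 0 < r →
      gfun r = (∫ Y in Ioi r, ((Y + Y ^ 2 / 2) ^ 2)⁻¹) * ∫ Y in Ioo (0:ℝ) r, (Y + Y ^ 2 / 2))
    ∧ MonotoneOn gfun (Ioi 0)
    ∧ Tendsto gfun atTop (nhds (2 / 9))
    ∧ IsLUB (gfun '' Ioi 0) (2 / 9) := by
  refine ⟨?_, strictMono_gfun.monotoneOn, tendsto_gfun, ?_⟩
  · intro r hr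
    have hI1 : ∫ Y in Ioi r, ((Y + Y ^ 2 / 2) ^ 2)⁻¹ = Afun r := by
      have := integral_Ioi_of_hasDerivAt_of_nonneg
        (g := fun y => -(Afun y)) (g' := fun Y => ((Y + Y ^ 2 / 2) ^ 2)⁻¹) (a := r) (l := 0)
        ((hasDerivAt_Afun r hr).neg.continuousAt.continuousWithinAt)
        (fun x hx => by
          have hx0 : (0:ℝ) < x := lt_trans hr hx
          have := (hasDerivAt_Afun x hx0).neg
          rw [neg_neg] at this
          exact this)
        (fun x _ => by positivity)
        (by simpa using tendsto_Afun.neg)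
      rw [this]
      ring
    have hI2 : ∫ Y in Ioo (0:ℝ) r, (Y + Y ^ 2 / 2) = r^2/2 + r^3/6 := by
      rw [← integral_Ioc_eq_integral_Ioo, ← intervalIntegral.integral_of_le hr.le]
      have h1 : IntervalIntegrable (fun x : ℝ => x) volume 0 r :=
        continuous_id.intervalIntegrable _ _
      have h2 : IntervalIntegrable (fun x : ℝ => x ^ 2 / 2) volume 0 r :=
        ((continuous_pow 2).div_const 2).intervalIntegrable _ _
      rw [intervalIntegral.integral_add h1 h2, intervalIntegral.integral_div,
        integral_id, integral_pow]
      norm_num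
      ring
    rw [hI1, hI2]
    rfl
  · constructor
    · rintro y ⟨r, hr, rfl⟩
      apply ge_of_tendsto tendsto_gfun
      filter_upwards [eventually_ge_atTop r] with x hx
      rcases eq_or_lt_of_le hx with h | h
      · exact le_of_eq (by rw [h])
      · exact (strictMono_gfun hr (lt_trans hr h) h).le
    · intro b hb
      apply le_of_tendsto tendsto_gfun
      filter_upwards [eventually_gt_atTop 0] with x hx
      exact hb ⟨x, hx, rfl⟩
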